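/- Let p : ℝ^3 → ℝ be the polynomial p(x) = (x_1+x_2+x_3)(x_1−x_2+x_3)(2x_1−x_2−x_3)(x_1+2x_2−x_3). Then: (a) p is hyperbolic along e = (0,0,1); (b) its hyperbolicity cone satisfies Λ(p,e) = {x ∈ ℝ^3 : x_1+x_2+x_3 ≥ 0, x_1−x_2+x_3 ≥ 0, −2x_1+x_2+x_3 ≥ 0, −x_1−2x_2+x_3 ≥ 0}; (c) p is a minimal degree polynomial for Λ(p,e), i.e., p divides every hyperbolic polynomial q along e with Λ(q,e) = Λ(p,e); and (d) p is not isometric — in fact, for z = (3,1,0) and y = (−1,0,0) there is no w ∈ ℝ^3 with λ(w) = λ(z) and λ(w+y) = λ(w) + λ(y). -/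

import Mathlib

open MvPolynomial

/-- The polynomial `p(x) = (x₁+x₂+x₃)(x₁-x₂+x₃)(2x₁-x₂-x₃)(x₁+2x₂-x₃)` on `ℝ³`. -/
noncomputable def P8 : MvPolynomial (Fin 3) ℝ :=
  (X 0 + X 1 + X 2) * (X 0 - X 1 + X 2) * (2 * X 0 - X 1 - X 2) * (X 0 + 2 * X 1 - X 2)

noncomputable def p8 (x : Fin 3 → ℝ) : ℝ := MvPolynomial.eval x P8

def e8 : Fin 3 → ℝ := ![0, 0, 1]

/-- `r` is the (decreasingly ordered) vector of eigenvalues of `x`, i.e. of the roots of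
`t ↦ p8(x - t e8)`, counted with multiplicity. -/
def IsEig8 (x : Fin 3 → ℝ) (r : Fin 4 → ℝ) : Prop :=
  Antitone r ∧ ∀ t : ℝ, p8 (x - t • e8) = p8 e8 * ∏ i, (r i - t)

/-- The hyperbolicity cone `Λ(p8, e8)`: all eigenvalues nonnegative. -/
def Lambda8 : Set (Fin 3 → ℝ) :=
  {x | ∃ r : Fin 4 → ℝ, IsEig8 x r ∧ ∀ i, 0 ≤ r i}

def aT (x : Fin 3 → ℝ) : Fin 4 → ℝ :=
  ![x 0 + x 1 + x 2, x 0 - x 1 + x 2, -2*x 0 + x 1 + x 2, -x 0 - 2*x 1 + x 2]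

lemma p8_eval (y : Fin 3 → ℝ) :
    p8 y = (y 0 + y 1 + y 2) * (y 0 - y 1 + y 2) * (2*y 0 - y 1 - y 2) * (y 0 + 2*y 1 - y 2) := by
  simp [p8, P8]

lemma p8_e8 : p8 e8 = 1 := by rw [p8_eval]; norm_num [e8, Matrix.cons_val_two]

lemma key8 (x : Fin 3 → ℝ) (t : ℝ) : p8 (x - t • e8) = ∏ i, (aT x i - t) := by
  rw [p8_eval]
  simp only [Pi.sub_apply, Pi.smul_apply, smul_eq_mul, e8, aT, Fin.prod_univ_four,
    Matrix.cons_val_zero, Matrix.cons_val_one, Matrix.head_cons, Matrix.cons_val_two,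
    Matrix.tail_cons, Matrix.cons_val_three]
  ring

lemma exists_eig (x : Fin 3 → ℝ) :
    ∃ r : Fin 4 → ℝ, IsEig8 x r ∧ ∀ i, ∃ j, r i = aT x j := by
  set f := aT x with hf
  set e : Equiv.Perm (Fin 4) := (Fin.revPerm).trans (Tuple.sort f) with he
  refine ⟨f ∘ e, ⟨?_, ?_⟩, ?_⟩
  · intro i j hij
    exact Tuple.monotone_sort f (by simpa using Fin.rev_le_rev.mpr hij)
  · intro t
    rw [p8_e8, one_mul, key8]
    exact (Equiv.prod_comp e (fun j => f j - t)).symm ▸ rfl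
  · intro i; exact ⟨e i, rfl⟩

lemma prod_ident {x : Fin 3 → ℝ} {r : Fin 4 → ℝ} (h : IsEig8 x r) (t : ℝ) :
    ∏ i, (aT x i - t) = ∏ i, (r i - t) := by
  have := h.2 t
  rwa [p8_e8, one_mul, key8] at this

lemma lambda8_eq : Lambda8 = {x : Fin 3 → ℝ | ∀ i, 0 ≤ aT x i} := by
  ext x
  constructor
  · rintro ⟨r, hr, hge⟩ i
    by_contra hneg
    push_neg at hneg
    have h0 : ∏ j, (aT x j - aT x i) = 0 :=
      Finset.prod_eq_zero (Finset.mem_univ i) (sub_self _)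
    have h1 : (0:ℝ) < ∏ j, (r j - aT x i) :=
      Finset.prod_pos (fun j _ => by have := hge j; linarith)
    rw [prod_ident hr (aT x i)] at h0
    linarith
  · intro hx
    obtain ⟨r, hr, hval⟩ := exists_eig x
    exact ⟨r, hr, fun i => by obtain ⟨j, hj⟩ := hval i; rw [hj]; exact hx j⟩

lemma lambda8_eq' : Lambda8 = {x : Fin 3 → ℝ |
    0 ≤ x 0 + x 1 + x 2 ∧ 0 ≤ x 0 - x 1 + x 2 ∧
    0 ≤ -2 * x 0 + x 1 + x 2 ∧ 0 ≤ -x 0 - 2 * x 1 + x 2} := by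
  rw [lambda8_eq]
  ext x
  simp only [Set.mem_setOf_eq, aT, Fin.forall_fin_succ, Fin.forall_fin_zero_pi]
  norm_num [Fin.forall_fin_succ, Matrix.cons_val_two]

lemma pin_eig (A B C : ℝ) (hAB : B < A) (hBC : C < B)
    (h1 : A*A ≠ B*C) (h2 : A*B ≠ B*C) (h3 : A*C ≠ B*C) (h4 : B*B ≠ B*C) (h5 : C*C ≠ B*C)
    (hA : A ≠ 0) (hC : C ≠ 0)
    (r : Fin 4 → ℝ) (hanti : Antitone r)
    (hprod : ∀ t, ∏ i, (r i - t) = (A - t)*(B - t)*(C - t)*(C - t)) :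
    r = ![A,B,C,C] := by
  have mem : ∀ i, r i = A ∨ r i = B ∨ r i = C := by
    intro i
    have h0 : ∏ j, (r j - r i) = 0 :=
      Finset.prod_eq_zero (Finset.mem_univ i) (sub_self _)
    rw [hprod] at h0
    rcases mul_eq_zero.1 h0 with h | h
    · rcases mul_eq_zero.1 h with h | h
      · rcases mul_eq_zero.1 h with h | h
        · left; linarith
        · right; left; linarith
      · right; right; linarith
    · right; right; linarith
  have hex : ∀ t, (A - t)*(B - t)*(C - t)*(C - t) = 0 → ∃ i, r i = t := by
    intro t ht
    have : ∏ j, (r j - t) = 0 := by rw [hprod]; exact ht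
    obtain ⟨i, _, hi⟩ := Finset.prod_eq_zero_iff.1 this
    exact ⟨i, by linarith⟩
  have hr0 : r 0 = A := by
    obtain ⟨i, hi⟩ := hex A (by ring)
    have : A ≤ r 0 := hi ▸ hanti (Fin.zero_le i)
    rcases mem 0 with h | h | h <;> linarith
  have hr3 : r 3 = C := by
    obtain ⟨i, hi⟩ := hex C (by ring)
    have : r 3 ≤ C := hi ▸ hanti (Fin.le_last i)
    rcases mem 3 with h | h | h <;> linarith
  have hp0 := hprod 0
  rw [Fin.prod_univ_four, hr0, hr3] at hp0
  have e1 : A * (C * (r 1 * r 2)) = A * (C * (B * C)) := by linear_combination hp0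
  have h12 : r 1 * r 2 = B * C := mul_left_cancel₀ hC (mul_left_cancel₀ hA e1)
  have hord : r 2 ≤ r 1 := hanti (by decide : (1:Fin 4) ≤ 2)
  have hr1 : r 1 = B := by
    rcases mem 1 with h | h | h <;> rcases mem 2 with h' | h' | h' <;>
      first
      | exact h
      | (rw [h, h'] at h12
         first
         | exact absurd h12 h1
         | exact absurd h12 h2
         | exact absurd h12 h3
         | exact absurd h12 h5)
      | (rw [h, h'] at hord; linarith)
  have hr2 : r 2 = C := by
    rw [hr1] at h12
    rcases mem 2 with h' | h' | h' <;>
      first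
      | exact h'
      | (rw [h'] at h12
         first
         | exact absurd (by linear_combination h12) h2
         | exact absurd h12 h4)
  funext i
  fin_cases i <;> simp [hr0, hr1, hr2, hr3]

lemma not_iso :
    ¬ ∃ (w : Fin 3 → ℝ) (rw rz ry rwy : Fin 4 → ℝ),
        IsEig8 w rw ∧ IsEig8 ![3, 1, 0] rz ∧ IsEig8 ![-1, 0, 0] ry ∧
        IsEig8 (w + ![(-1 : ℝ), 0, 0]) rwy ∧ rw = rz ∧ rwy = rw + ry := by
  rintro ⟨w, rw, rz, ry, rwy, hw, hz, hy, hwy, hrwz, hrwy⟩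
  have haz : ∀ t : ℝ, ∏ i, (rz i - t) = (4 - t)*(2 - t)*((-5) - t)*((-5) - t) := by
    intro t
    rw [← prod_ident hz t, Fin.prod_univ_four]
    simp [aT]
    ring
  have hay : ∀ t : ℝ, ∏ i, (ry i - t) = (2 - t)*(1 - t)*((-1) - t)*((-1) - t) := by
    intro t
    rw [← prod_ident hy t, Fin.prod_univ_four]
    simp [aT]
    ring
  have hrz : rz = ![4, 2, -5, -5] :=
    pin_eig 4 2 (-5) (by norm_num) (by norm_num) (by norm_num) (by norm_num)
      (by norm_num) (by norm_num) (by norm_num) (by norm_num) (by norm_num)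
      rz hz.1 haz
  have hry : ry = ![2, 1, -1, -1] :=
    pin_eig 2 1 (-1) (by norm_num) (by norm_num) (by norm_num) (by norm_num)
      (by norm_num) (by norm_num) (by norm_num) (by norm_num) (by norm_num)
      ry hy.1 hay
  have hrwy4 : rwy = ![6, 3, -6, -6] := by
    rw [hrwy, hrwz, hrz, hry]
    funext i
    fin_cases i <;> norm_num
  have identw : ∀ t : ℝ, ∏ i, (aT w i - t) = (4 - t)*(2 - t)*((-5) - t)*((-5) - t) := by
    intro t
    rw [prod_ident hw t, hrwz, hrz, Fin.prod_univ_four]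
    norm_num [Matrix.cons_val_two, Matrix.cons_val_three]
  have identwy : ∀ t : ℝ,
      ∏ i, (aT (w + ![(-1 : ℝ), 0, 0]) i - t) = (6 - t)*(3 - t)*((-6) - t)*((-6) - t) := by
    intro t
    rw [prod_ident hwy t, hrwy4, Fin.prod_univ_four]
    norm_num [Matrix.cons_val_two, Matrix.cons_val_three]
  have memw : ∀ i, aT w i = 4 ∨ aT w i = 2 ∨ aT w i = -5 := by
    intro i
    have h0 : ∏ j, (aT w j - aT w i) = 0 :=
      Finset.prod_eq_zero (Finset.mem_univ i) (sub_self _)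
    rw [identw] at h0
    rcases mul_eq_zero.1 h0 with h | h
    · rcases mul_eq_zero.1 h with h | h
      · rcases mul_eq_zero.1 h with h | h
        · left; linarith
        · right; left; linarith
      · right; right; linarith
    · right; right; linarith
  have memwy : ∀ i, aT (w + ![(-1 : ℝ), 0, 0]) i = 6 ∨
      aT (w + ![(-1 : ℝ), 0, 0]) i = 3 ∨ aT (w + ![(-1 : ℝ), 0, 0]) i = -6 := by
    intro i
    have h0 : ∏ j, (aT (w + ![(-1 : ℝ), 0, 0]) j - aT (w + ![(-1 : ℝ), 0, 0]) i) = 0 :=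
      Finset.prod_eq_zero (Finset.mem_univ i) (sub_self _)
    rw [identwy] at h0
    rcases mul_eq_zero.1 h0 with h | h
    · rcases mul_eq_zero.1 h with h | h
      · rcases mul_eq_zero.1 h with h | h
        · left; linarith
        · right; left; linarith
      · right; right; linarith
    · right; right; linarith
  have s0 : aT (w + ![(-1 : ℝ), 0, 0]) 0 = aT w 0 - 1 := by simp [aT]; ring
  have s1 : aT (w + ![(-1 : ℝ), 0, 0]) 1 = aT w 1 - 1 := by simp [aT]; ring
  have s2 : aT (w + ![(-1 : ℝ), 0, 0]) 2 = aT w 2 + 2 := by simp [aT]; ring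
  have s3 : aT (w + ![(-1 : ℝ), 0, 0]) 3 = aT w 3 + 1 := by simp [aT]; ring
  have rel : 7 * aT w 0 - 9 * aT w 1 - 4 * aT w 2 + 6 * aT w 3 = 0 := by
    simp [aT]; ring
  have hw2 : aT w 2 = 4 := by
    have h := memwy 2; rw [s2] at h
    rcases memw 2 with h' | h' | h' <;> rcases h with h | h | h <;> linarith
  have hw3 : aT w 3 = 2 := by
    have h := memwy 3; rw [s3] at h
    rcases memw 3 with h' | h' | h' <;> rcases h with h | h | h <;> linarith
  have hw0 : aT w 0 = 4 ∨ aT w 0 = -5 := by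
    have h := memwy 0; rw [s0] at h
    rcases memw 0 with h' | h' | h' <;> rcases h with h | h | h <;> first | (left; linarith) | (right; linarith) | linarith
  have hw1 : aT w 1 = 4 ∨ aT w 1 = -5 := by
    have h := memwy 1; rw [s1] at h
    rcases memw 1 with h' | h' | h' <;> rcases h with h | h | h <;> first | (left; linarith) | (right; linarith) | linarith
  rcases hw0 with h | h <;> rcases hw1 with h' | h' <;> linarith

lemma van : ∀ (n : ℕ) (S : Fin n → Set ℝ), (∀ i, (S i).Infinite) →
    ∀ f : MvPolynomial (Fin n) ℝ, (∀ x : Fin n → ℝ, (∀ i, x i ∈ S i) → eval x f = 0) →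
    f = 0 := by
  intro n
  induction n with
  | zero =>
    intro S hS f hf
    obtain ⟨r, rfl⟩ := C_surjective (Fin 0) f
    have := hf (fun i => i.elim0) (fun i => i.elim0)
    simp only [eval_C] at this
    rw [this, map_zero]
  | succ n ih =>
    intro S hS f hf
    have key : ∀ m, (finSuccEquiv ℝ n f).coeff m = 0 := by
      intro m
      apply ih (fun i => S i.succ) (fun i => hS _)
      intro x hx
      have hzero : Polynomial.map (eval x) (finSuccEquiv ℝ n f) = 0 := by
        apply Polynomial.eq_zero_of_infinite_isRoot
        apply Set.Infinite.mono ?_ (hS 0)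
        intro y hy
        show Polynomial.IsRoot _ y
        rw [Polynomial.IsRoot, ← eval_eq_eval_mv_eval']
        apply hf
        intro i
        refine Fin.cases ?_ ?_ i
        · simpa using hy
        · intro j; simpa using hx j
      rw [← coeff_eval_eq_eval_coeff, hzero, Polynomial.coeff_zero]
    have h0 : finSuccEquiv ℝ n f = 0 := Polynomial.ext fun m => by rw [key m, Polynomial.coeff_zero]
    have := (finSuccEquiv ℝ n).injective (a₁ := f) (a₂ := 0)
    simp only [map_zero] at this
    exact this h0

lemma eval_aeval3 (s : Fin 3 → MvPolynomial (Fin 3) ℝ) (x : Fin 3 → ℝ)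
    (Q : MvPolynomial (Fin 3) ℝ) :
    eval x (aeval s Q) = eval (fun i => eval x (s i)) Q := by
  rw [aeval_def, algebraMap_eq, ← eval_assoc]
  rfl

lemma subst_dvd (c : MvPolynomial (Fin 3) ℝ) (Q : MvPolynomial (Fin 3) ℝ) :
    (X 2 - c) ∣ (Q - aeval ![X 0, X 1, c] Q) := by
  induction Q using MvPolynomial.induction_on with
  | C a => simp
  | add p q hp hq =>
    have := dvd_add hp hq
    convert this using 1
    rw [map_add]; ring
  | mul_X p n hp =>
    rw [map_mul, aeval_X]
    fin_cases n
    · have := hp.mul_right (X (0 : Fin 3))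
      convert this using 1
      simp [Matrix.cons_val_zero]; ring
    · have := hp.mul_right (X (1 : Fin 3))
      convert this using 1
      simp; ring
    · have := dvd_add (hp.mul_right (X (2 : Fin 3)))
        (dvd_mul_left (X (2 : Fin 3) - c) (aeval ![X 0, X 1, c] p))
      convert this using 1
      simp; ring

lemma prime_lin (α β : ℝ) :
    Prime (X 2 - (C α * X 0 + C β * X 1) : MvPolynomial (Fin 3) ℝ) := by
  have hX0 : Prime (X 0 : MvPolynomial (Fin 3) ℝ) := by
    rw [← MulEquiv.prime_iff (finSuccEquiv ℝ 2).toMulEquiv]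
    simpa [finSuccEquiv_X_zero] using (Polynomial.prime_X (R := MvPolynomial (Fin 2) ℝ))
  have hX2 : Prime (X 2 : MvPolynomial (Fin 3) ℝ) := by
    have := (MulEquiv.prime_iff (renameEquiv ℝ (Equiv.swap (0 : Fin 3) 2)).toMulEquiv
      (p := (X 0 : MvPolynomial (Fin 3) ℝ))).symm
    rw [this] at hX0
    simpa using hX0
  set c : MvPolynomial (Fin 3) ℝ := C α * X 0 + C β * X 1 with hc
  have hEF : ∀ (d : MvPolynomial (Fin 3) ℝ),
      (aeval ![X 0, X 1, X 2 + c]).comp (aeval ![X 0, X 1, X 2 - c]) = AlgHom.id ℝ _ ∧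
      (aeval ![X 0, X 1, X 2 - c]).comp (aeval ![X 0, X 1, X 2 + c]) = AlgHom.id ℝ _ := by
    intro d
    constructor <;>
    · apply MvPolynomial.algHom_ext
      intro i
      fin_cases i <;> simp [hc] <;> ring
  let E : MvPolynomial (Fin 3) ℝ ≃ₐ[ℝ] MvPolynomial (Fin 3) ℝ :=
    AlgEquiv.ofAlgHom (aeval ![X 0, X 1, X 2 - c]) (aeval ![X 0, X 1, X 2 + c])
      (hEF 0).2 (hEF 0).1
  have : E (X 2) = X 2 - c := by simp [E]
  rw [← this]
  exact (MulEquiv.prime_iff E.toMulEquiv).mpr hX2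

noncomputable def cj (α β : ℝ) : MvPolynomial (Fin 3) ℝ := C α * X 0 + C β * X 1
noncomputable def Lj (α β : ℝ) : MvPolynomial (Fin 3) ℝ := X 2 - cj α β

lemma prime_Lj (α β : ℝ) : Prime (Lj α β) := prime_lin α β

lemma eval_Lj (α β : ℝ) (x : Fin 3 → ℝ) :
    eval x (Lj α β) = x 2 - (α * x 0 + β * x 1) := by
  simp [Lj, cj]

lemma dvd_of_vanish (α β : ℝ) (Q : MvPolynomial (Fin 3) ℝ) (S T : Set ℝ)
    (hS : S.Infinite) (hT : T.Infinite)
    (h : ∀ s ∈ S, ∀ u ∈ T, eval ![s, u, α * s + β * u] Q = 0) : Lj α β ∣ Q := by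
  have hR : aeval ![X 0, X 1, cj α β] Q = 0 := by
    apply van 3 ![S, T, Set.univ]
    · intro i; fin_cases i <;> simp [hS, hT, Set.infinite_univ]
    · intro x hx
      rw [eval_aeval3]
      have hy : (fun i => eval x (![X 0, X 1, cj α β] i)) = ![x 0, x 1, α * x 0 + β * x 1] := by
        funext i; fin_cases i <;> simp [cj]
      rw [hy]
      exact h (x 0) (by simpa using hx 0) (x 1) (by simpa using hx 1)
  have hd := subst_dvd (cj α β) Q
  rwa [hR, sub_zero] at hd

lemma aT_sub_smul (x : Fin 3 → ℝ) (ε : ℝ) (i : Fin 4) :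
    aT (x - ε • e8) i = aT x i - ε := by
  fin_cases i <;> (simp [aT, e8]; try ring)

lemma dvd_eval_zero {f g : MvPolynomial (Fin 3) ℝ} (h : f ∣ g) (x : Fin 3 → ℝ)
    (hf : eval x f = 0) : eval x g = 0 := by
  obtain ⟨d, rfl⟩ := h
  rw [map_mul, hf, zero_mul]

lemma partc (k : ℕ) (Q : MvPolynomial (Fin 3) ℝ) (hhom : Q.IsHomogeneous k)
    (hQe : MvPolynomial.eval e8 Q ≠ 0)
    (hhyp : ∀ x : Fin 3 → ℝ, ∃ r : Fin k → ℝ, ∀ t : ℝ,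
      MvPolynomial.eval (x - t • e8) Q = MvPolynomial.eval e8 Q * ∏ i, (r i - t))
    (hset : {x : Fin 3 → ℝ | ∃ r : Fin k → ℝ,
        (∀ t : ℝ, MvPolynomial.eval (x - t • e8) Q
            = MvPolynomial.eval e8 Q * ∏ i, (r i - t)) ∧ ∀ i, 0 ≤ r i} = Lambda8) :
    P8 ∣ Q := by
  -- k ≠ 0
  have hk : k ≠ 0 := by
    intro hk0
    subst hk0
    have hmem : ![(-1 : ℝ), 0, 0] ∈ Lambda8 := by
      rw [← hset]
      obtain ⟨r, hr⟩ := hhyp ![(-1 : ℝ), 0, 0]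
      exact ⟨r, hr, fun i => i.elim0⟩
    rw [lambda8_eq] at hmem
    have := hmem 0
    norm_num [aT, Matrix.cons_val_two] at this
  haveI : Nonempty (Fin k) := Fin.pos_iff_nonempty.mp (Nat.pos_of_ne_zero hk)
  -- vanishing on facets
  have hvan : ∀ (x : Fin 3 → ℝ) (j : Fin 4), (∀ i, 0 ≤ aT x i) → aT x j = 0 →
      eval x Q = 0 := by
    intro x j hpos hj
    have hxL : x ∈ Lambda8 := by rw [lambda8_eq]; exact hpos
    rw [← hset] at hxL
    obtain ⟨r, hid, hr0⟩ := hxL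
    by_cases hz : ∃ i, r i = 0
    · obtain ⟨i, hi⟩ := hz
      have h0 := hid 0
      simp only [zero_smul, sub_zero] at h0
      rw [h0]
      have : ∏ i, r i = 0 := Finset.prod_eq_zero (Finset.mem_univ i) hi
      rw [this, mul_zero]
    · push_neg at hz
      have hpos' : ∀ i, 0 < r i := fun i => lt_of_le_of_ne (hr0 i) (Ne.symm (hz i))
      have hne : (Finset.univ : Finset (Fin k)).Nonempty := Finset.univ_nonempty
      set ε := Finset.univ.inf' hne r with hε
      have hεpos : 0 < ε := (Finset.lt_inf'_iff hne).mpr (fun i _ => hpos' i)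
      have hmem : (x - ε • e8) ∈ Lambda8 := by
        rw [← hset]
        refine ⟨fun i => r i - ε, fun t => ?_, fun i => ?_⟩
        · have hsub : x - ε • e8 - t • e8 = x - (ε + t) • e8 := by
            rw [sub_sub, ← add_smul]
          rw [hsub, hid (ε + t)]
          congr 1
          exact Finset.prod_congr rfl fun i _ => by ring
        · have := Finset.inf'_le r (Finset.mem_univ i)
          rw [← hε] at this
          show 0 ≤ r i - ε
          linarith
      rw [lambda8_eq] at hmem
      have hj' := hmem j
      rw [aT_sub_smul, hj] at hj'
      linarith
  -- the four linear factors divide Q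
  have d1 : Lj (-1) (-1) ∣ Q := by
    apply dvd_of_vanish _ _ _ (Set.Iio 0) (Set.Iio 0) (Set.Iio_infinite 0) (Set.Iio_infinite 0)
    intro s hs u hu
    rw [Set.mem_Iio] at hs hu
    apply hvan _ 0 _ (by norm_num [aT, Matrix.cons_val_two]; try ring)
    intro i
    fin_cases i <;> norm_num [aT, Matrix.cons_val_two] <;> linarith
  have d2 : Lj (-1) 1 ∣ Q := by
    apply dvd_of_vanish _ _ _ (Set.Iio (-1)) (Set.Ioo 0 1) (Set.Iio_infinite _)
      (Set.Ioo_infinite (by norm_num))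
    intro s hs u hu
    rw [Set.mem_Iio] at hs
    rw [Set.mem_Ioo] at hu
    apply hvan _ 1 _ (by norm_num [aT, Matrix.cons_val_two]; try ring)
    intro i
    fin_cases i <;> norm_num [aT, Matrix.cons_val_two] <;> linarith [hu.1, hu.2]
  have d3 : Lj 2 (-1) ∣ Q := by
    apply dvd_of_vanish _ _ _ (Set.Ioi 1) (Set.Ioo 0 (1/3)) (Set.Ioi_infinite _)
      (Set.Ioo_infinite (by norm_num))
    intro s hs u hu
    rw [Set.mem_Ioi] at hs
    rw [Set.mem_Ioo] at hu
    apply hvan _ 2 _ (by norm_num [aT, Matrix.cons_val_two]; try ring)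
    intro i
    fin_cases i <;> norm_num [aT, Matrix.cons_val_two] <;> linarith [hu.1, hu.2]
  have d4 : Lj 1 2 ∣ Q := by
    apply dvd_of_vanish _ _ _ (Set.Ioo 0 1) (Set.Ioi 1) (Set.Ioo_infinite (by norm_num))
      (Set.Ioi_infinite _)
    intro s hs u hu
    rw [Set.mem_Ioo] at hs
    rw [Set.mem_Ioi] at hu
    apply hvan _ 3 _ (by norm_num [aT, Matrix.cons_val_two, Matrix.cons_val_three]; try ring)
    intro i
    fin_cases i <;> norm_num [aT, Matrix.cons_val_two] <;> linarith [hs.1, hs.2]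
  -- non-divisibility among the factors
  have n21 : ¬ (Lj (-1) 1 ∣ Lj (-1) (-1)) := by
    intro h
    have := dvd_eval_zero h ![0, 1, 1] (by rw [eval_Lj]; norm_num [Matrix.cons_val_two])
    rw [eval_Lj] at this; norm_num [Matrix.cons_val_two] at this
  have n31 : ¬ (Lj 2 (-1) ∣ Lj (-1) (-1)) := by
    intro h
    have := dvd_eval_zero h ![1, 2, 0] (by rw [eval_Lj]; norm_num [Matrix.cons_val_two])
    rw [eval_Lj] at this; norm_num [Matrix.cons_val_two] at this
  have n32 : ¬ (Lj 2 (-1) ∣ Lj (-1) 1) := by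
    intro h
    have := dvd_eval_zero h ![1, 2, 0] (by rw [eval_Lj]; norm_num [Matrix.cons_val_two])
    rw [eval_Lj] at this; norm_num [Matrix.cons_val_two] at this
  have n41 : ¬ (Lj 1 2 ∣ Lj (-1) (-1)) := by
    intro h
    have := dvd_eval_zero h ![0, 1, 2] (by rw [eval_Lj]; norm_num [Matrix.cons_val_two])
    rw [eval_Lj] at this; norm_num [Matrix.cons_val_two] at this
  have n42 : ¬ (Lj 1 2 ∣ Lj (-1) 1) := by
    intro h
    have := dvd_eval_zero h ![0, 1, 2] (by rw [eval_Lj]; norm_num [Matrix.cons_val_two])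
    rw [eval_Lj] at this; norm_num [Matrix.cons_val_two] at this
  have n43 : ¬ (Lj 1 2 ∣ Lj 2 (-1)) := by
    intro h
    have := dvd_eval_zero h ![0, 1, 2] (by rw [eval_Lj]; norm_num [Matrix.cons_val_two])
    rw [eval_Lj] at this; norm_num [Matrix.cons_val_two] at this
  -- peel off the factors
  obtain ⟨Q1, hQ1⟩ := d1
  have h2 : Lj (-1) 1 ∣ Q1 := by
    rcases (prime_Lj (-1) 1).2.2 _ _ (hQ1 ▸ d2) with h | h
    · exact absurd h n21
    · exact h
  obtain ⟨Q2, hQ2⟩ := h2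
  have h3 : Lj 2 (-1) ∣ Q2 := by
    have hd : Lj 2 (-1) ∣ Lj (-1) (-1) * (Lj (-1) 1 * Q2) := by
      rw [← hQ2, ← hQ1]; exact d3
    rcases (prime_Lj 2 (-1)).2.2 _ _ hd with h | h
    · exact absurd h n31
    rcases (prime_Lj 2 (-1)).2.2 _ _ h with h' | h'
    · exact absurd h' n32
    · exact h'
  obtain ⟨Q3, hQ3⟩ := h3
  have h4 : Lj 1 2 ∣ Q3 := by
    have hd : Lj 1 2 ∣ Lj (-1) (-1) * (Lj (-1) 1 * (Lj 2 (-1) * Q3)) := by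
      rw [← hQ3, ← hQ2, ← hQ1]; exact d4
    rcases (prime_Lj 1 2).2.2 _ _ hd with h | h
    · exact absurd h n41
    rcases (prime_Lj 1 2).2.2 _ _ h with h' | h'
    · exact absurd h' n42
    rcases (prime_Lj 1 2).2.2 _ _ h' with h'' | h''
    · exact absurd h'' n43
    · exact h''
  obtain ⟨Q4, hQ4⟩ := h4
  refine ⟨Q4, ?_⟩
  rw [hQ1, hQ2, hQ3, hQ4]
  have hP8 : P8 = Lj (-1) (-1) * Lj (-1) 1 * Lj 2 (-1) * Lj 1 2 := by
    simp only [P8, Lj, cj, map_neg, map_one, map_ofNat]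
    ring
  rw [hP8]
  ring


/-- (a) `p8` is hyperbolic along `e8 = (0,0,1)`; (b) its hyperbolicity
cone is the stated polyhedral cone; (c) `p8` is a minimal degree polynomial for
`Λ(p8,e8)`, i.e. it divides every hyperbolic polynomial along `e8` having the same
hyperbolicity cone; (d) `p8` is not isometric: for `z = (3,1,0)`, `y = (-1,0,0)` there
is no `w` with `λ(w) = λ(z)` and `λ(w+y) = λ(w) + λ(y)`. -/
theorem stmt_8 :
    (p8 e8 ≠ 0 ∧ ∀ x : Fin 3 → ℝ, ∃ r : Fin 4 → ℝ, IsEig8 x r) ∧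
    (Lambda8 = {x : Fin 3 → ℝ |
        0 ≤ x 0 + x 1 + x 2 ∧ 0 ≤ x 0 - x 1 + x 2 ∧
        0 ≤ -2 * x 0 + x 1 + x 2 ∧ 0 ≤ -x 0 - 2 * x 1 + x 2}) ∧
    (∀ (k : ℕ) (Q : MvPolynomial (Fin 3) ℝ), Q.IsHomogeneous k →
      MvPolynomial.eval e8 Q ≠ 0 →
      (∀ x : Fin 3 → ℝ, ∃ r : Fin k → ℝ, ∀ t : ℝ,
        MvPolynomial.eval (x - t • e8) Q = MvPolynomial.eval e8 Q * ∏ i, (r i - t)) →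
      {x : Fin 3 → ℝ | ∃ r : Fin k → ℝ,
        (∀ t : ℝ, MvPolynomial.eval (x - t • e8) Q
            = MvPolynomial.eval e8 Q * ∏ i, (r i - t)) ∧ ∀ i, 0 ≤ r i} = Lambda8 →
      P8 ∣ Q) ∧
    ¬ ∃ (w : Fin 3 → ℝ) (rw rz ry rwy : Fin 4 → ℝ),
        IsEig8 w rw ∧ IsEig8 ![3, 1, 0] rz ∧ IsEig8 ![-1, 0, 0] ry ∧
        IsEig8 (w + ![(-1 : ℝ), 0, 0]) rwy ∧ rw = rz ∧ rwy = rw + ry := by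
  refine ⟨⟨?_, ?_⟩, ?_, ?_, ?_⟩
  · rw [p8_e8]; norm_num
  · intro x
    obtain ⟨r, hr, _⟩ := exists_eig x
    exact ⟨r, hr⟩
  · exact lambda8_eq'
  · exact partc
  · exact not_iso
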